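/- arXiv:1903.10402 — 3 statements merged into one kernel-verified Lean document; each statement's English description precedes it below -/
import Mathlib

section
/- Mutual exclusion for the asymmetric algorithm: in every reachable global state of the asymmetric algorithm, at most one process p_i has its program counter at the critical section; i.e., no two processes are in the critical section state at the same time. -/
/-!
Model of the asymmetric mutual-exclusion algorithm with a coordinator.

Shared variables:
* `turn : Option (Fin N)` where `none` stands for THINKING,
* `flag : Fin N → Flag` with values REMAINDER / WAITING.

Process `i` automaton: state 1 --(flag[i]:=WAITING)--> state 2
--(turn = i ⇒)--> critical section --(flag[i]:=REMAINDER)--> state 3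
--(turn := THINKING)--> state 4.

Coordinator automaton (local counter `p`, initially set to 0):
state 1 --(p:=0)--> state 2; state 2 --(flag[p]≠WAITING ⇒)--> state 3;
state 2 --(flag[p]=WAITING ⇒)--> state 2.1 --(turn:=p)--> state 2.2
--(turn=THINKING ⇒)--> state 3; state 3 --(p:=(p+1) mod N)--> state 2.
-/

namespace Asym

inductive Flag
  | remainder | waiting
  deriving DecidableEq

/-- Program counter of a process. -/
inductive PPC
  | s1 | s2 | cs | s3 | s4
  deriving DecidableEq

/-- Program counter of the coordinator. -/
inductive CPC
  | c1 | c2 | c21 | c22 | c3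
  deriving DecidableEq

/-- A global state. -/
structure St (N : ℕ) where
  /-- `none` encodes THINKING. -/
  turn : Option (Fin N)
  flag : Fin N → Flag
  pc : Fin N → PPC
  cpc : CPC
  p : Fin N

/-- The initial global state. -/
def initSt (N : ℕ) [NeZero N] : St N where
  turn := none
  flag := fun _ => .remainder
  pc := fun _ => .s1
  cpc := .c1
  p := 0

/-- Who takes a step: a process or the coordinator. -/
inductive Label (N : ℕ)
  | proc : Fin N → Label N
  | coord

/-- One enabled transition of a single agent. -/
inductive Step {N : ℕ} [NeZero N] : Label N → St N → St N → Prop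
  | p12 (s : St N) (i : Fin N) (h : s.pc i = .s1) :
      Step (.proc i) s { s with flag := Function.update s.flag i .waiting,
                                pc := Function.update s.pc i .s2 }
  | p2cs (s : St N) (i : Fin N) (h : s.pc i = .s2) (ht : s.turn = some i) :
      Step (.proc i) s { s with pc := Function.update s.pc i .cs }
  | pcs3 (s : St N) (i : Fin N) (h : s.pc i = .cs) :
      Step (.proc i) s { s with flag := Function.update s.flag i .remainder,
                                pc := Function.update s.pc i .s3 }
  | p34 (s : St N) (i : Fin N) (h : s.pc i = .s3) :
      Step (.proc i) s { s with turn := none,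
                                pc := Function.update s.pc i .s4 }
  | c12 (s : St N) (h : s.cpc = .c1) :
      Step .coord s { s with p := 0, cpc := .c2 }
  | c23 (s : St N) (h : s.cpc = .c2) (hf : s.flag s.p ≠ .waiting) :
      Step .coord s { s with cpc := .c3 }
  | c2_21 (s : St N) (h : s.cpc = .c2) (hf : s.flag s.p = .waiting) :
      Step .coord s { s with cpc := .c21 }
  | c21_22 (s : St N) (h : s.cpc = .c21) :
      Step .coord s { s with turn := some s.p, cpc := .c22 }
  | c22_3 (s : St N) (h : s.cpc = .c22) (ht : s.turn = none) :
      Step .coord s { s with cpc := .c3 }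
  | c3_2 (s : St N) (h : s.cpc = .c3) :
      Step .coord s { s with p := s.p + 1, cpc := .c2 }

/-- An execution: a sequence of global states starting from the initial
state, together with a schedule; at each instant either exactly one agent
takes one of its enabled transitions, or (if `none` is scheduled) the
state stutters. -/
structure Exec (N : ℕ) [NeZero N] where
  states : ℕ → St N
  sched : ℕ → Option (Label N)
  init : states 0 = initSt N
  step : ∀ n, match sched n with
    | some l => Step l (states n) (states (n + 1))
    | none => states (n + 1) = states n

/-- An agent is enabled if it can take a transition. -/
def Enabled {N : ℕ} [NeZero N] (l : Label N) (s : St N) : Prop :=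
  ∃ s', Step l s s'

/-- Weak fairness: an agent whose next transition is continuously enabled
eventually takes it. -/
def Exec.Fair {N : ℕ} [NeZero N] (e : Exec N) : Prop :=
  ∀ l n, (∀ m, n ≤ m → Enabled l (e.states m)) → ∃ m, n ≤ m ∧ e.sched m = some l

/-- A state is reachable if it occurs in some execution. -/
def Reachable {N : ℕ} [NeZero N] (s : St N) : Prop :=
  ∃ e : Exec N, ∃ n, e.states n = s

/-- The key invariant: any process in the CS or at s3 owns the turn, and
the turn is THINKING unless the coordinator is at c22. -/
def Inv {N : ℕ} (s : St N) : Prop :=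
  (∀ j : Fin N, (s.pc j = .cs ∨ s.pc j = .s3) → s.turn = some j) ∧
  (s.cpc ≠ .c22 → s.turn = none)

theorem step_inv {N : ℕ} [NeZero N] {l : Label N} {s s' : St N}
    (hstep : Step l s s') (hinv : Inv s) : Inv s' := by
  obtain ⟨h1, h2⟩ := hinv
  cases hstep with
  | p12 s i h =>
      refine ⟨fun j hj => ?_, h2⟩
      rcases eq_or_ne j i with rfl | hne
      · simp_all [Function.update_self]
      · exact h1 j (by simpa [Function.update_of_ne hne] using hj)
  | p2cs s i h ht =>
      refine ⟨fun j hj => ?_, fun hc => ?_⟩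
      · rcases eq_or_ne j i with rfl | hne
        · exact ht
        · exact h1 j (by simpa [Function.update_of_ne hne] using hj)
      · exact h2 hc
  | pcs3 s i h =>
      refine ⟨fun j hj => ?_, h2⟩
      rcases eq_or_ne j i with rfl | hne
      · exact h1 j (Or.inl h)
      · exact h1 j (by simpa [Function.update_of_ne hne] using hj)
  | p34 s i h =>
      refine ⟨fun j hj => ?_, fun _ => rfl⟩
      rcases eq_or_ne j i with rfl | hne
      · simp_all [Function.update_self]
      · have := h1 j (by simpa [Function.update_of_ne hne] using hj)
        have hi := h1 i (Or.inr h)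
        simp_all
  | c12 s h =>
      exact ⟨h1, fun _ => h2 (by simp [h])⟩
  | c23 s h hf =>
      exact ⟨h1, fun _ => h2 (by simp [h])⟩
  | c2_21 s h hf =>
      exact ⟨h1, fun _ => h2 (by simp [h])⟩
  | c21_22 s h =>
      refine ⟨fun j hj => ?_, fun hc => absurd rfl hc⟩
      have := h1 j hj
      have := h2 (by simp [h])
      simp_all
  | c22_3 s h ht =>
      refine ⟨fun j hj => ?_, fun _ => ht⟩
      have := h1 j hj
      simp_all
  | c3_2 s h =>
      exact ⟨h1, fun _ => h2 (by simp [h])⟩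

theorem reachable_inv {N : ℕ} [NeZero N] {s : St N} (hs : Reachable s) :
    Inv s := by
  obtain ⟨e, n, rfl⟩ := hs
  induction n with
  | zero =>
      rw [e.init]
      exact ⟨fun j hj => by simp [initSt] at hj, fun _ => rfl⟩
  | succ n ih =>
      have hstep := e.step n
      cases hsch : e.sched n with
      | none => rw [hsch] at hstep; rwa [hstep]
      | some l => rw [hsch] at hstep; exact step_inv hstep ih

end Asym

open Asym in
/-- **Mutual exclusion for the asymmetric algorithm.**
In every reachable global state, at most one process is in the
critical-section state. -/
theorem asym_mutual_exclusion {N : ℕ} [NeZero N] (s : St N)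
    (hs : Reachable s) (i j : Fin N)
    (hi : s.pc i = PPC.cs) (hj : s.pc j = PPC.cs) : i = j := by
  obtain ⟨h1, -⟩ := reachable_inv hs
  have hi' := h1 i (Or.inl hi)
  have hj' := h1 j (Or.inl hj)
  rw [hi'] at hj'
  exact Option.some_injective _ hj'
end

section
/- Mutual exclusion for the one-writer asymmetric algorithm: in every reachable global state of the one-writer asymmetric algorithm, at most one process p_i has its program counter at the critical section. -/
/-!
Model of the asymmetric mutual-exclusion algorithm using only
one-writer/multiple-reader shared variables: `turn` is writable only by the
coordinator.

Process `i` automaton: state 1 --(flag[i]:=WAITING)--> state 2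
--(turn = i ⇒)--> critical section --(flag[i]:=REMAINDER)--> state 3
--(turn ≠ i ⇒)--> state 4.

Coordinator automaton (local counter `p`, initially set to 0):
state 1 --(p:=0)--> state 2; state 2 --(flag[p]≠WAITING ⇒)--> state 3;
state 2 --(flag[p]=WAITING ⇒)--> state 2.1 --(turn:=p)--> state 2.2
--(flag[p]=REMAINDER ⇒ turn:=THINKING)--> state 3;
state 3 --(p:=(p+1) mod N)--> state 2.
-/

namespace Asym1W

inductive Flag
  | remainder | waiting
  deriving DecidableEq

/-- Program counter of a process. -/
inductive PPC
  | s1 | s2 | cs | s3 | s4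
  deriving DecidableEq

/-- Program counter of the coordinator. -/
inductive CPC
  | c1 | c2 | c21 | c22 | c3
  deriving DecidableEq

/-- A global state. -/
structure St (N : ℕ) where
  /-- `none` encodes THINKING. -/
  turn : Option (Fin N)
  flag : Fin N → Flag
  pc : Fin N → PPC
  cpc : CPC
  p : Fin N

/-- The initial global state. -/
def initSt (N : ℕ) [NeZero N] : St N where
  turn := none
  flag := fun _ => .remainder
  pc := fun _ => .s1
  cpc := .c1
  p := 0

/-- Who takes a step: a process or the coordinator. -/
inductive Label (N : ℕ)
  | proc : Fin N → Label N
  | coord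

/-- One enabled transition of a single agent. -/
inductive Step {N : ℕ} [NeZero N] : Label N → St N → St N → Prop
  | p12 (s : St N) (i : Fin N) (h : s.pc i = .s1) :
      Step (.proc i) s { s with flag := Function.update s.flag i .waiting,
                                pc := Function.update s.pc i .s2 }
  | p2cs (s : St N) (i : Fin N) (h : s.pc i = .s2) (ht : s.turn = some i) :
      Step (.proc i) s { s with pc := Function.update s.pc i .cs }
  | pcs3 (s : St N) (i : Fin N) (h : s.pc i = .cs) :
      Step (.proc i) s { s with flag := Function.update s.flag i .remainder,
                                pc := Function.update s.pc i .s3 }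
  | p34 (s : St N) (i : Fin N) (h : s.pc i = .s3) (ht : s.turn ≠ some i) :
      Step (.proc i) s { s with pc := Function.update s.pc i .s4 }
  | c12 (s : St N) (h : s.cpc = .c1) :
      Step .coord s { s with p := 0, cpc := .c2 }
  | c23 (s : St N) (h : s.cpc = .c2) (hf : s.flag s.p ≠ .waiting) :
      Step .coord s { s with cpc := .c3 }
  | c2_21 (s : St N) (h : s.cpc = .c2) (hf : s.flag s.p = .waiting) :
      Step .coord s { s with cpc := .c21 }
  | c21_22 (s : St N) (h : s.cpc = .c21) :
      Step .coord s { s with turn := some s.p, cpc := .c22 }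
  | c22_3 (s : St N) (h : s.cpc = .c22) (hf : s.flag s.p = .remainder) :
      Step .coord s { s with turn := none, cpc := .c3 }
  | c3_2 (s : St N) (h : s.cpc = .c3) :
      Step .coord s { s with p := s.p + 1, cpc := .c2 }

/-- An execution: a sequence of global states starting from the initial
state, together with a schedule; at each instant either exactly one agent
takes one of its enabled transitions, or (if `none` is scheduled) the
state stutters. -/
structure Exec (N : ℕ) [NeZero N] where
  states : ℕ → St N
  sched : ℕ → Option (Label N)
  init : states 0 = initSt N
  step : ∀ n, match sched n with
    | some l => Step l (states n) (states (n + 1))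
    | none => states (n + 1) = states n

/-- An agent is enabled if it can take a transition. -/
def Enabled {N : ℕ} [NeZero N] (l : Label N) (s : St N) : Prop :=
  ∃ s', Step l s s'

/-- Weak fairness: an agent whose next transition is continuously enabled
eventually takes it. -/
def Exec.Fair {N : ℕ} [NeZero N] (e : Exec N) : Prop :=
  ∀ l n, (∀ m, n ≤ m → Enabled l (e.states m)) → ∃ m, n ≤ m ∧ e.sched m = some l

/-- A state is reachable if it occurs in some execution. -/
def Reachable {N : ℕ} [NeZero N] (s : St N) : Prop :=
  ∃ e : Exec N, ∃ n, e.states n = s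

/-- The inductive invariant. -/
def Inv {N : ℕ} (s : St N) : Prop :=
  (∀ i, s.pc i = .cs → s.cpc = .c22 ∧ s.p = i) ∧
  (∀ i, (s.pc i = .s2 ∨ s.pc i = .cs) → s.flag i = .waiting) ∧
  (s.cpc = .c22 → s.turn = some s.p) ∧
  (s.cpc ≠ .c22 → s.turn = none)

theorem Inv.init (N : ℕ) [NeZero N] : Inv (initSt N) := by
  refine ⟨fun i h => by simp [initSt] at h, fun i h => ?_, ?_, ?_⟩ <;>
    simp [initSt] at *

theorem Inv.step {N : ℕ} [NeZero N] {l : Label N} {s s' : St N}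
    (hstep : Step l s s') (hinv : Inv s) : Inv s' := by
  obtain ⟨h1, h2, h3, h4⟩ := hinv
  cases hstep with
  | p12 s i h =>
      refine ⟨fun j hj => ?_, fun j hj => ?_, h3, h4⟩
      · dsimp only at hj ⊢
        by_cases hji : j = i
        · subst hji; rw [show (Function.update s.pc j PPC.s2) j = PPC.s2 from
            Function.update_self .. ] at hj; exact absurd hj (by simp)
        · rw [Function.update_of_ne hji] at hj; exact h1 j hj
      · dsimp only at hj ⊢
        by_cases hji : j = i
        · subst hji; exact Function.update_self ..
        · show Function.update s.flag i Flag.waiting j = Flag.waiting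
          rw [Function.update_of_ne hji]
          rw [show (Function.update s.pc i PPC.s2) j = s.pc j from
            Function.update_of_ne hji ..] at hj
          exact h2 j hj
  | p2cs s i h ht =>
      have hc : s.cpc = .c22 := by
        by_contra hc
        rw [h4 hc] at ht; simp at ht
      have hp : s.p = i := by
        have := h3 hc; rw [this] at ht; exact Option.some.inj ht
      refine ⟨fun j hj => ?_, fun j hj => ?_, h3, h4⟩
      · dsimp only at hj ⊢
        by_cases hji : j = i
        · subst hji; exact ⟨hc, hp⟩
        · rw [Function.update_of_ne hji] at hj; exact h1 j hj
      · dsimp only at hj ⊢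
        by_cases hji : j = i
        · subst hji; exact h2 j (Or.inl h)
        · rw [Function.update_of_ne hji] at hj; exact h2 j hj
  | pcs3 s i h =>
      refine ⟨fun j hj => ?_, fun j hj => ?_, h3, h4⟩
      · dsimp only at hj ⊢
        by_cases hji : j = i
        · subst hji; rw [show (Function.update s.pc j PPC.s3) j = PPC.s3 from
            Function.update_self .. ] at hj; exact absurd hj (by simp)
        · rw [Function.update_of_ne hji] at hj; exact h1 j hj
      · dsimp only at hj ⊢
        by_cases hji : j = i
        · subst hji
          rw [show (Function.update s.pc j PPC.s3) j = PPC.s3 from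
            Function.update_self .. ] at hj
          rcases hj with hj | hj <;> exact absurd hj (by simp)
        · show Function.update s.flag i Flag.remainder j = Flag.waiting
          rw [Function.update_of_ne hji]
          rw [show (Function.update s.pc i PPC.s3) j = s.pc j from
            Function.update_of_ne hji ..] at hj
          exact h2 j hj
  | p34 s i h ht =>
      refine ⟨fun j hj => ?_, fun j hj => ?_, h3, h4⟩
      · dsimp only at hj ⊢
        by_cases hji : j = i
        · subst hji; rw [show (Function.update s.pc j PPC.s4) j = PPC.s4 from
            Function.update_self .. ] at hj; exact absurd hj (by simp)
        · rw [Function.update_of_ne hji] at hj; exact h1 j hj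
      · dsimp only at hj ⊢
        by_cases hji : j = i
        · subst hji
          rw [show (Function.update s.pc j PPC.s4) j = PPC.s4 from
            Function.update_self .. ] at hj
          rcases hj with hj | hj <;> exact absurd hj (by simp)
        · rw [show (Function.update s.pc i PPC.s4) j = s.pc j from
            Function.update_of_ne hji ..] at hj
          exact h2 j hj
  | c12 s h =>
      refine ⟨fun j hj => ?_, h2, ?_, fun _ => h4 (by rw [h]; simp)⟩
      · exact absurd ((h1 j hj).1.symm.trans h) (by simp)
      · simp
  | c23 s h hf =>
      refine ⟨fun j hj => ?_, h2, ?_, fun _ => h4 (by rw [h]; simp)⟩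
      · exact absurd ((h1 j hj).1.symm.trans h) (by simp)
      · simp
  | c2_21 s h hf =>
      refine ⟨fun j hj => ?_, h2, ?_, fun _ => h4 (by rw [h]; simp)⟩
      · exact absurd ((h1 j hj).1.symm.trans h) (by simp)
      · simp
  | c21_22 s h =>
      refine ⟨fun j hj => ?_, h2, fun _ => rfl, ?_⟩
      · exact absurd ((h1 j hj).1.symm.trans h) (by simp)
      · simp
  | c22_3 s h hf =>
      refine ⟨fun j hj => ?_, h2, ?_, fun _ => rfl⟩
      · exfalso
        have ⟨_, hp⟩ := h1 j hj
        have := h2 j (Or.inr hj)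
        rw [← hp] at this
        rw [this] at hf; simp at hf
      · simp
  | c3_2 s h =>
      refine ⟨fun j hj => ?_, h2, ?_, fun _ => h4 (by rw [h]; simp)⟩
      · exact absurd ((h1 j hj).1.symm.trans h) (by simp)
      · simp

theorem Inv.reachable {N : ℕ} [NeZero N] {s : St N} (hs : Reachable s) :
    Inv s := by
  obtain ⟨e, n, rfl⟩ := hs
  induction n with
  | zero => rw [e.init]; exact Inv.init N
  | succ n ih =>
      have hstep := e.step n
      cases h : e.sched n with
      | some l => rw [h] at hstep; exact ih.step hstep
      | none => rw [h] at hstep; rw [hstep]; exact ih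

end Asym1W

open Asym1W in
/-- **Mutual exclusion for the one-writer asymmetric algorithm.**
In every reachable global state, at most one process is in the
critical-section state. -/
theorem asym1w_mutual_exclusion {N : ℕ} [NeZero N] (s : St N)
    (hs : Reachable s) (i j : Fin N)
    (hi : s.pc i = PPC.cs) (hj : s.pc j = PPC.cs) : i = j := by
  have h := Inv.reachable hs
  exact (h.1 i hi).2.symm.trans (h.1 j hj).2
end

section
/- For the symmetric algorithm: in every reachable global state, no two distinct processes have their program counters simultaneously at state 3.5.1. -/
/-!
Model of the symmetric mutual-exclusion algorithm (no coordinator).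

Shared variables: `turn ∈ {0,…,N−1, THINKING, FREE}` (initially FREE) and
`flag : Fin N → {REMAINDER, WAITING, CANDIDATE}` (initially all REMAINDER,
`flag[i]` writable only by process `i`).

Entry automaton for process `i` (program-counter states):
* `s1`   : set `flag[i] := WAITING`, go to `s2`;
* `s2`   : wait while `turn = THINKING`; if `turn = FREE` go to `s3`
           (beginning of the candidate phase); if `turn` is a process
           identifier, go to `s4`;
* `s3`   : set `flag[i] := CANDIDATE`, go to `s32` (state 3.2);
* `s32`  : repeat-loop test: if `turn = FREE ∧ flag[i] = CANDIDATE`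
           go to `s33` (state 3.3), otherwise leave the loop to `s37`;
* `s33`  : set `nCandidates := 0`, `minCandidate := −1`, initialize the scan
           counter, go to `s34`;
* `s34`  : scan loop (states 3.4/3.4.1/3.4.2), `j` from `N−1` down to `0`:
           if the scan is over, go to `s35`; otherwise inspect `flag[j]`:
           if it is CANDIDATE go to `s341` else decrement `j`;
* `s341` : set `nCandidates := nCandidates + 1`, `minCandidate := j`,
           decrement `j`, back to `s34`;
* `s35`  : if `turn = FREE ∧ nCandidates = 1` go to `s351` (state 3.5.1),
           otherwise go to `s36`;
* `s351` : set `turn := i`, go to `s352` (state 3.5.2);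
* `s352` : go to `s36`;
* `s36`  : if `turn ≠ FREE ∨ minCandidate < i` set `flag[i] := WAITING`
           (state 3.6); in either case return to the repeat test `s32`;
* `s37`  : after the repeat ends, set `flag[i] := WAITING`, go to `s4`;
* `s4`   : wait until `turn = i`, then enter the critical section `cs`.

Exit automaton for process `i`:
* `cs`   : set `turn := THINKING`, go to `s5` (state 5);
* `s5`   : set `flag[i] := REMAINDER`, `nextTurn := THINKING`, initialize the
           scan counter, go to `s6`;
* `s6`   : loop (states 6/6.1/6.2) with `j` over `i+1,…,N−1,0,…,i−1` while
           `nextTurn = THINKING`: if `flag[j] ≠ REMAINDER` set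
           `nextTurn := j`; when the loop ends go to `s63` (state 6.3);
* `s63`  : if `nextTurn = THINKING` set `turn := FREE` else
           `turn := nextTurn`; go to `s8` (state 8).
-/

namespace Sym

/-- Values of the shared variable `turn` (and of `nextTurn`). -/
inductive Turn (N : ℕ)
  | free
  | thinking
  | id : Fin N → Turn N
  deriving DecidableEq

inductive Flag
  | remainder | waiting | candidate
  deriving DecidableEq

/-- Program counter of a process. -/
inductive PC
  | s1 | s2 | s3 | s32 | s33 | s34 | s341 | s35 | s351 | s352 | s36 | s37
  | s4 | cs | s5 | s6 | s63 | s8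
  deriving DecidableEq

/-- A global state: shared variables plus each process's program counter and
local variables (`cnt` is the loop counter `j`, reused by the candidate scan
and the exit scan). -/
structure St (N : ℕ) where
  turn : Turn N
  flag : Fin N → Flag
  pc : Fin N → PC
  nCand : Fin N → ℕ
  minCand : Fin N → ℤ
  nextTurn : Fin N → Turn N
  cnt : Fin N → ℕ

/-- The initial global state. -/
def initSt (N : ℕ) : St N where
  turn := .free
  flag := fun _ => .remainder
  pc := fun _ => .s1
  nCand := fun _ => 0
  minCand := fun _ => 0
  nextTurn := fun _ => .thinking
  cnt := fun _ => 0

/-- In the exit scan of process `i`, the index examined when the counter is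
`k` is `(i + k + 1) mod N`: the scan order is `i+1, …, N−1, 0, …, i−1`. -/
def nxt {N : ℕ} (i : Fin N) (k : ℕ) : Fin N :=
  ⟨(i.val + k + 1) % N, Nat.mod_lt _ i.pos⟩

/-- One enabled transition of process `i`. -/
inductive Step {N : ℕ} : Fin N → St N → St N → Prop
  | t1 (s : St N) (i : Fin N) (h : s.pc i = .s1) :
      Step i s { s with flag := Function.update s.flag i .waiting,
                        pc := Function.update s.pc i .s2 }
  | t2free (s : St N) (i : Fin N) (h : s.pc i = .s2) (ht : s.turn = .free) :
      Step i s { s with pc := Function.update s.pc i .s3 }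
  | t2id (s : St N) (i j : Fin N) (h : s.pc i = .s2) (ht : s.turn = .id j) :
      Step i s { s with pc := Function.update s.pc i .s4 }
  | t3 (s : St N) (i : Fin N) (h : s.pc i = .s3) :
      Step i s { s with flag := Function.update s.flag i .candidate,
                        pc := Function.update s.pc i .s32 }
  | t32enter (s : St N) (i : Fin N) (h : s.pc i = .s32)
      (ht : s.turn = .free) (hf : s.flag i = .candidate) :
      Step i s { s with pc := Function.update s.pc i .s33 }
  | t32exit (s : St N) (i : Fin N) (h : s.pc i = .s32)
      (hc : ¬ (s.turn = .free ∧ s.flag i = .candidate)) :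
      Step i s { s with pc := Function.update s.pc i .s37 }
  | t33 (s : St N) (i : Fin N) (h : s.pc i = .s33) :
      Step i s { s with nCand := Function.update s.nCand i 0,
                        minCand := Function.update s.minCand i (-1),
                        cnt := Function.update s.cnt i N,
                        pc := Function.update s.pc i .s34 }
  | t34done (s : St N) (i : Fin N) (h : s.pc i = .s34) (hc : s.cnt i = 0) :
      Step i s { s with pc := Function.update s.pc i .s35 }
  | t34cand (s : St N) (i j : Fin N) (h : s.pc i = .s34) (hc : s.cnt i ≠ 0)
      (hj : (j : ℕ) = s.cnt i - 1) (hf : s.flag j = .candidate) :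
      Step i s { s with pc := Function.update s.pc i .s341 }
  | t34nocand (s : St N) (i j : Fin N) (h : s.pc i = .s34) (hc : s.cnt i ≠ 0)
      (hj : (j : ℕ) = s.cnt i - 1) (hf : s.flag j ≠ .candidate) :
      Step i s { s with cnt := Function.update s.cnt i (s.cnt i - 1),
                        pc := Function.update s.pc i .s34 }
  | t341 (s : St N) (i : Fin N) (h : s.pc i = .s341) :
      Step i s { s with nCand := Function.update s.nCand i (s.nCand i + 1),
                        minCand := Function.update s.minCand i ((s.cnt i : ℤ) - 1),
                        cnt := Function.update s.cnt i (s.cnt i - 1),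
                        pc := Function.update s.pc i .s34 }
  | t35yes (s : St N) (i : Fin N) (h : s.pc i = .s35)
      (ht : s.turn = .free) (hn : s.nCand i = 1) :
      Step i s { s with pc := Function.update s.pc i .s351 }
  | t35no (s : St N) (i : Fin N) (h : s.pc i = .s35)
      (hc : ¬ (s.turn = .free ∧ s.nCand i = 1)) :
      Step i s { s with pc := Function.update s.pc i .s36 }
  | t351 (s : St N) (i : Fin N) (h : s.pc i = .s351) :
      Step i s { s with turn := .id i, pc := Function.update s.pc i .s352 }
  | t352 (s : St N) (i : Fin N) (h : s.pc i = .s352) :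
      Step i s { s with pc := Function.update s.pc i .s36 }
  | t36yes (s : St N) (i : Fin N) (h : s.pc i = .s36)
      (hc : s.turn ≠ .free ∨ s.minCand i < (i : ℤ)) :
      Step i s { s with flag := Function.update s.flag i .waiting,
                        pc := Function.update s.pc i .s32 }
  | t36no (s : St N) (i : Fin N) (h : s.pc i = .s36)
      (hc : ¬ (s.turn ≠ .free ∨ s.minCand i < (i : ℤ))) :
      Step i s { s with pc := Function.update s.pc i .s32 }
  | t37 (s : St N) (i : Fin N) (h : s.pc i = .s37) :
      Step i s { s with flag := Function.update s.flag i .waiting,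
                        pc := Function.update s.pc i .s4 }
  | t4 (s : St N) (i : Fin N) (h : s.pc i = .s4) (ht : s.turn = .id i) :
      Step i s { s with pc := Function.update s.pc i .cs }
  | tcs (s : St N) (i : Fin N) (h : s.pc i = .cs) :
      Step i s { s with turn := .thinking, pc := Function.update s.pc i .s5 }
  | t5 (s : St N) (i : Fin N) (h : s.pc i = .s5) :
      Step i s { s with flag := Function.update s.flag i .remainder,
                        nextTurn := Function.update s.nextTurn i .thinking,
                        cnt := Function.update s.cnt i 0,
                        pc := Function.update s.pc i .s6 }
  | t6exit (s : St N) (i : Fin N) (h : s.pc i = .s6)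
      (hc : s.nextTurn i ≠ .thinking ∨ s.cnt i = N - 1) :
      Step i s { s with pc := Function.update s.pc i .s63 }
  | t6found (s : St N) (i : Fin N) (h : s.pc i = .s6)
      (hnt : s.nextTurn i = .thinking) (hcnt : s.cnt i ≠ N - 1)
      (hf : s.flag (nxt i (s.cnt i)) ≠ .remainder) :
      Step i s { s with
        nextTurn := Function.update s.nextTurn i (.id (nxt i (s.cnt i))),
        cnt := Function.update s.cnt i (s.cnt i + 1),
        pc := Function.update s.pc i .s6 }
  | t6notfound (s : St N) (i : Fin N) (h : s.pc i = .s6)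
      (hnt : s.nextTurn i = .thinking) (hcnt : s.cnt i ≠ N - 1)
      (hf : s.flag (nxt i (s.cnt i)) = .remainder) :
      Step i s { s with cnt := Function.update s.cnt i (s.cnt i + 1),
                        pc := Function.update s.pc i .s6 }
  | t63free (s : St N) (i : Fin N) (h : s.pc i = .s63)
      (hn : s.nextTurn i = .thinking) :
      Step i s { s with turn := .free, pc := Function.update s.pc i .s8 }
  | t63id (s : St N) (i b : Fin N) (h : s.pc i = .s63)
      (hn : s.nextTurn i = .id b) :
      Step i s { s with turn := .id b, pc := Function.update s.pc i .s8 }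

/-- An execution: a sequence of global states starting from the initial
state, together with a schedule; at each instant either exactly one process
takes one of its enabled transitions, or (if `none` is scheduled) the state
stutters. -/
structure Exec (N : ℕ) where
  states : ℕ → St N
  sched : ℕ → Option (Fin N)
  init : states 0 = initSt N
  step : ∀ n, match sched n with
    | some i => Step i (states n) (states (n + 1))
    | none => states (n + 1) = states n

/-- A process is enabled if it can take a transition. -/
def Enabled {N : ℕ} (i : Fin N) (s : St N) : Prop :=
  ∃ s', Step i s s'

/-- Weak fairness: a process whose next transition is continuously enabled
eventually takes it. -/
def Exec.Fair {N : ℕ} (e : Exec N) : Prop :=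
  ∀ i n, (∀ m, n ≤ m → Enabled i (e.states m)) → ∃ m, n ≤ m ∧ e.sched m = some i

/-- A state is reachable if it occurs in some execution. -/
def Reachable {N : ℕ} (s : St N) : Prop :=
  ∃ e : Exec N, ∃ n, e.states n = s

/-- The extended critical section: program-counter states in `[CS, 8)`. -/
def ExtCS : PC → Prop := fun p => p = .cs ∨ p = .s5 ∨ p = .s6 ∨ p = .s63

/-- Program-counter states in the interval `[3, 4]`: from entering the
candidate phase up to (and including) waiting at state 4. -/
def In34 : PC → Prop := fun p =>
  p = .s3 ∨ p = .s32 ∨ p = .s33 ∨ p = .s34 ∨ p = .s341 ∨ p = .s35 ∨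
  p = .s351 ∨ p = .s352 ∨ p = .s36 ∨ p = .s37 ∨ p = .s4

/-- Position of `x` in the cyclic order `a+1, …, N−1, 0, …, a−1, a`
starting just after `a` (so `rank a (a+1) = 0` and `rank a a = N−1`). -/
def rank {N : ℕ} (a x : Fin N) : ℕ := (x.val + N - a.val - 1) % N

end Sym
namespace Sym

variable {N : ℕ}

/-- Candidate-phase program counters (flag is CANDIDATE throughout). -/
def CSp (p : PC) : Prop :=
  p = .s33 ∨ p = .s34 ∨ p = .s341 ∨ p = .s35 ∨ p = .s351 ∨ p = .s352

instance : DecidablePred CSp := fun p => by unfold CSp; infer_instance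

/-- `Psd s i m`: process `i`'s scan has already read index `m`. -/
def Psd (s : St N) (i : Fin N) (m : ℕ) : Prop :=
  ((s.pc i = .s34 ∨ s.pc i = .s341) ∧ s.cnt i ≤ m) ∨
    (s.pc i = .s35 ∨ s.pc i = .s351 ∨ s.pc i = .s352)

instance (s : St N) (i : Fin N) (m : ℕ) : Decidable (Psd s i m) := by
  unfold Psd; infer_instance

/-- 1 if `i` has already read its own index, else 0. -/
def sc (s : St N) (i : Fin N) : ℕ := if Psd s i i.val then 1 else 0

structure Inv (s : St N) : Prop where
  flagC : ∀ i, CSp (s.pc i) → s.flag i = .candidate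
  selfA : ∀ i, (s.pc i = .s34 ∨ s.pc i = .s341) → s.cnt i ≤ i.val → 1 ≤ s.nCand i
  selfB : ∀ i, (s.pc i = .s35 ∨ s.pc i = .s351 ∨ s.pc i = .s352) → 1 ≤ s.nCand i
  at351 : ∀ i, s.pc i = .s351 → s.nCand i = 1
  pos341 : ∀ i, s.pc i = .s341 → 1 ≤ s.cnt i
  pair : ∀ i j, i ≠ j → CSp (s.pc i) → CSp (s.pc j) →
    Psd s i j.val → Psd s j i.val →
    sc s i + sc s j + 1 ≤ s.nCand i + s.nCand j

lemma Psd_congr {s s' : St N} {i : Fin N} (hp : s'.pc i = s.pc i)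
    (hc : s'.cnt i = s.cnt i) (m : ℕ) : Psd s' i m ↔ Psd s i m := by
  unfold Psd; rw [hp, hc]

lemma sc_congr {s s' : St N} {i : Fin N} (hp : s'.pc i = s.pc i)
    (hc : s'.cnt i = s.cnt i) : sc s' i = sc s i := by
  unfold sc; rw [if_congr (Psd_congr hp hc i.val) rfl rfl]

lemma sc_le_nCand {s : St N} (h : Inv s) (i : Fin N) : sc s i ≤ s.nCand i := by
  unfold sc; split
  · next hps =>
    rcases hps with ⟨h34, hle⟩ | h35
    · exact h.selfA i h34 hle
    · exact h.selfB i h35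
  · exact Nat.zero_le _

lemma sc_le_one (s : St N) (i : Fin N) : sc s i ≤ 1 := by
  unfold sc; split <;> simp

lemma CSp_of_pc {p : PC}
    (hp : p = .s33 ∨ p = .s34 ∨ p = .s341 ∨ p = .s35 ∨ p = .s351 ∨ p = .s352) :
    CSp p := hp

/-- Frame lemma: the stepping process ends outside the candidate phase. -/
lemma Inv.frame {s s' : St N} (h : Inv s) (i : Fin N)
    (hpc : ∀ k, k ≠ i → s'.pc k = s.pc k)
    (hfl : ∀ k, k ≠ i → s'.flag k = s.flag k)
    (hcn : ∀ k, k ≠ i → s'.cnt k = s.cnt k)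
    (hnc : ∀ k, k ≠ i → s'.nCand k = s.nCand k)
    (hi : ¬ CSp (s'.pc i)) : Inv s' := by
  constructor
  · intro k hk
    by_cases hki : k = i
    · exact absurd (hki ▸ hk) hi
    · rw [hfl k hki]; exact h.flagC k (hpc k hki ▸ hk)
  · intro k hor hle
    by_cases hki : k = i
    · exact absurd (CSp_of_pc (by tauto)) (hki ▸ hi)
    · rw [hnc k hki]; exact h.selfA k (by rwa [hpc k hki] at hor) (by rwa [hcn k hki] at hle)
  · intro k hor
    by_cases hki : k = i
    · exact absurd (CSp_of_pc (by tauto)) (hki ▸ hi)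
    · rw [hnc k hki]; exact h.selfB k (by rwa [hpc k hki] at hor)
  · intro k hp
    by_cases hki : k = i
    · exact absurd (CSp_of_pc (by tauto)) (hki ▸ hi)
    · rw [hnc k hki]; exact h.at351 k (by rwa [hpc k hki] at hp)
  · intro k hp
    by_cases hki : k = i
    · exact absurd (CSp_of_pc (by tauto)) (hki ▸ hi)
    · rw [hcn k hki]; exact h.pos341 k (by rwa [hpc k hki] at hp)
  · intro a b hab ca cb pab pba
    by_cases ha : a = i
    · exact absurd (ha ▸ ca) hi
    by_cases hb : b = i
    · exact absurd (hb ▸ cb) hi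
    rw [hnc a ha, hnc b hb, sc_congr (hpc a ha) (hcn a ha), sc_congr (hpc b hb) (hcn b hb)]
    exact h.pair a b hab (hpc a ha ▸ ca) (hpc b hb ▸ cb)
      ((Psd_congr (hpc a ha) (hcn a ha) b.val).mp pab)
      ((Psd_congr (hpc b hb) (hcn b hb) a.val).mp pba)

/-- Frame lemma for moves that stay inside the candidate phase and keep
other processes' components unchanged. -/
lemma Inv.frame2 {s s' : St N} (h : Inv s) (i : Fin N)
    (hpc : ∀ k, k ≠ i → s'.pc k = s.pc k)
    (hfl : ∀ k, k ≠ i → s'.flag k = s.flag k)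
    (hcn : ∀ k, k ≠ i → s'.cnt k = s.cnt k)
    (hnc : ∀ k, k ≠ i → s'.nCand k = s.nCand k)
    (hCS : CSp (s'.pc i))
    (hflagi : s'.flag i = .candidate)
    (hPsd : ∀ m, m < N → (Psd s' i m ↔ Psd s i m))
    (hselfA : (s'.pc i = .s34 ∨ s'.pc i = .s341) → s'.cnt i ≤ i.val → 1 ≤ s'.nCand i)
    (hselfB : (s'.pc i = .s35 ∨ s'.pc i = .s351 ∨ s'.pc i = .s352) → 1 ≤ s'.nCand i)
    (h351 : s'.pc i = .s351 → s'.nCand i = 1)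
    (hpos : s'.pc i = .s341 → 1 ≤ s'.cnt i)
    (hold : (CSp (s.pc i) ∧ s'.nCand i = s.nCand i) ∨ (∀ m, m < N → ¬ Psd s' i m)) :
    Inv s' := by
  have hsci : sc s' i = sc s i := by
    unfold sc; rw [if_congr (hPsd i.val i.isLt) rfl rfl]
  constructor
  · intro k hk
    by_cases hki : k = i
    · rw [hki]; exact hflagi
    · rw [hfl k hki]; exact h.flagC k (hpc k hki ▸ hk)
  · intro k hor hle
    by_cases hki : k = i
    · exact hki ▸ hselfA (hki ▸ hor) (hki ▸ hle)
    · rw [hnc k hki]; exact h.selfA k (by rwa [hpc k hki] at hor) (by rwa [hcn k hki] at hle)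
  · intro k hor
    by_cases hki : k = i
    · exact hki ▸ hselfB (hki ▸ hor)
    · rw [hnc k hki]; exact h.selfB k (by rwa [hpc k hki] at hor)
  · intro k hp
    by_cases hki : k = i
    · exact hki ▸ h351 (hki ▸ hp)
    · rw [hnc k hki]; exact h.at351 k (by rwa [hpc k hki] at hp)
  · intro k hp
    by_cases hki : k = i
    · exact hki ▸ hpos (hki ▸ hp)
    · rw [hcn k hki]; exact h.pos341 k (by rwa [hpc k hki] at hp)
  · intro a b hab ca cb pab pba
    by_cases ha : a = i
    · subst ha
      have hbne : b ≠ a := hab.symm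
      rcases hold with ⟨hcsi, hndi⟩ | hno
      · rw [hnc b hbne, hndi, hsci, sc_congr (hpc b hbne) (hcn b hbne)]
        exact h.pair a b hab hcsi (hpc b hbne ▸ cb)
          ((hPsd b.val b.isLt).mp pab) ((Psd_congr (hpc b hbne) (hcn b hbne) a.val).mp pba)
      · exact absurd pab (hno b.val b.isLt)
    by_cases hb : b = i
    · subst hb
      rcases hold with ⟨hcsi, hndi⟩ | hno
      · rw [hnc a ha, hndi, hsci, sc_congr (hpc a ha) (hcn a ha)]
        exact h.pair a b hab (hpc a ha ▸ ca) hcsi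
          ((Psd_congr (hpc a ha) (hcn a ha) b.val).mp pab) ((hPsd a.val a.isLt).mp pba)
      · exact absurd pba (hno a.val a.isLt)
    rw [hnc a ha, hnc b hb, sc_congr (hpc a ha) (hcn a ha), sc_congr (hpc b hb) (hcn b hb)]
    exact h.pair a b hab (hpc a ha ▸ ca) (hpc b hb ▸ cb)
      ((Psd_congr (hpc a ha) (hcn a ha) b.val).mp pab)
      ((Psd_congr (hpc b hb) (hcn b hb) a.val).mp pba)

end Sym
namespace Sym
variable {N : ℕ}

lemma Inv.preserve {s s' : St N} {i : Fin N} (hst : Step i s s') (h : Inv s) : Inv s' := by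
  cases hst with
  | t1 _ _ hp =>
      exact h.frame i (fun k hk => Function.update_of_ne hk _ _)
        (fun k hk => Function.update_of_ne hk _ _) (fun k hk => rfl) (fun k hk => rfl)
        (by simp [CSp])
  | t2free _ _ hp ht =>
      exact h.frame i (fun k hk => Function.update_of_ne hk _ _)
        (fun k hk => rfl) (fun k hk => rfl) (fun k hk => rfl) (by simp [CSp])
  | t2id _ _ _ hp ht =>
      exact h.frame i (fun k hk => Function.update_of_ne hk _ _)
        (fun k hk => rfl) (fun k hk => rfl) (fun k hk => rfl) (by simp [CSp])
  | t3 _ _ hp =>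
      exact h.frame i (fun k hk => Function.update_of_ne hk _ _)
        (fun k hk => Function.update_of_ne hk _ _) (fun k hk => rfl) (fun k hk => rfl)
        (by simp [CSp])
  | t32exit _ _ hp hc =>
      exact h.frame i (fun k hk => Function.update_of_ne hk _ _)
        (fun k hk => rfl) (fun k hk => rfl) (fun k hk => rfl) (by simp [CSp])
  | t35no _ _ hp hc =>
      exact h.frame i (fun k hk => Function.update_of_ne hk _ _)
        (fun k hk => rfl) (fun k hk => rfl) (fun k hk => rfl) (by simp [CSp])
  | t352 _ _ hp =>
      exact h.frame i (fun k hk => Function.update_of_ne hk _ _)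
        (fun k hk => rfl) (fun k hk => rfl) (fun k hk => rfl) (by simp [CSp])
  | t36yes _ _ hp hc =>
      exact h.frame i (fun k hk => Function.update_of_ne hk _ _)
        (fun k hk => Function.update_of_ne hk _ _) (fun k hk => rfl) (fun k hk => rfl)
        (by simp [CSp])
  | t36no _ _ hp hc =>
      exact h.frame i (fun k hk => Function.update_of_ne hk _ _)
        (fun k hk => rfl) (fun k hk => rfl) (fun k hk => rfl) (by simp [CSp])
  | t37 _ _ hp =>
      exact h.frame i (fun k hk => Function.update_of_ne hk _ _)
        (fun k hk => Function.update_of_ne hk _ _) (fun k hk => rfl) (fun k hk => rfl)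
        (by simp [CSp])
  | t4 _ _ hp ht =>
      exact h.frame i (fun k hk => Function.update_of_ne hk _ _)
        (fun k hk => rfl) (fun k hk => rfl) (fun k hk => rfl) (by simp [CSp])
  | tcs _ _ hp =>
      exact h.frame i (fun k hk => Function.update_of_ne hk _ _)
        (fun k hk => rfl) (fun k hk => rfl) (fun k hk => rfl) (by simp [CSp])
  | t5 _ _ hp =>
      exact h.frame i (fun k hk => Function.update_of_ne hk _ _)
        (fun k hk => Function.update_of_ne hk _ _)
        (fun k hk => Function.update_of_ne hk _ _) (fun k hk => rfl) (by simp [CSp])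
  | t6exit _ _ hp hc =>
      exact h.frame i (fun k hk => Function.update_of_ne hk _ _)
        (fun k hk => rfl) (fun k hk => rfl) (fun k hk => rfl) (by simp [CSp])
  | t6found _ _ hp hnt hcnt hf =>
      exact h.frame i (fun k hk => Function.update_of_ne hk _ _)
        (fun k hk => rfl) (fun k hk => Function.update_of_ne hk _ _) (fun k hk => rfl)
        (by simp [CSp])
  | t6notfound _ _ hp hnt hcnt hf =>
      exact h.frame i (fun k hk => Function.update_of_ne hk _ _)
        (fun k hk => rfl) (fun k hk => Function.update_of_ne hk _ _) (fun k hk => rfl)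
        (by simp [CSp])
  | t63free _ _ hp hn =>
      exact h.frame i (fun k hk => Function.update_of_ne hk _ _)
        (fun k hk => rfl) (fun k hk => rfl) (fun k hk => rfl) (by simp [CSp])
  | t63id _ _ _ hp hn =>
      exact h.frame i (fun k hk => Function.update_of_ne hk _ _)
        (fun k hk => rfl) (fun k hk => rfl) (fun k hk => rfl) (by simp [CSp])
  | t32enter _ _ hp ht hf =>
      refine h.frame2 i (fun k hk => Function.update_of_ne hk _ _)
        (fun k hk => rfl) (fun k hk => rfl) (fun k hk => rfl)
        (by simp [CSp]) hf (by intro m _; simp [Psd, hp])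
        (by intro hor; simp [Psd] at hor) (by intro hor; simp [Psd] at hor)
        (by intro h351; simp at h351) (by intro h341; simp at h341)
        (Or.inr (fun m _ hmp => by simp [Psd] at hmp))
  | t33 _ _ hp =>
      refine h.frame2 i (fun k hk => Function.update_of_ne hk _ _)
        (fun k hk => rfl) (fun k hk => Function.update_of_ne hk _ _)
        (fun k hk => Function.update_of_ne hk _ _)
        (by simp [CSp]) (h.flagC i (by rw [hp]; exact Or.inl rfl))
        ?_ ?_ (by intro hor; simp [Psd] at hor)
        (by intro h351; simp at h351) (by intro h341; simp at h341)
        (Or.inr ?_)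
      · intro m hm
        simp only [Psd, hp]
        simp
        omega
      · intro _ hle
        simp at hle
        have := i.isLt
        omega
      · intro m hm hmp
        simp [Psd] at hmp
        omega
  | t34cand _ _ j hp hc hj hf =>
      refine h.frame2 i (fun k hk => Function.update_of_ne hk _ _)
        (fun k hk => rfl) (fun k hk => rfl) (fun k hk => rfl)
        (by simp [CSp]) (h.flagC i (by rw [hp]; exact Or.inr (Or.inl rfl)))
        (by intro m _; simp [Psd, hp])
        (fun _ hle => h.selfA i (Or.inl hp) hle)
        (by intro hor; simp [Psd] at hor)
        (by intro h351; simp at h351)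
        (fun _ => Nat.pos_of_ne_zero hc)
        (Or.inl ⟨by rw [hp]; exact Or.inr (Or.inl rfl), rfl⟩)
  | t34done _ _ hp hc =>
      refine h.frame2 i (fun k hk => Function.update_of_ne hk _ _)
        (fun k hk => rfl) (fun k hk => rfl) (fun k hk => rfl)
        (by simp [CSp]) (h.flagC i (by rw [hp]; exact Or.inr (Or.inl rfl)))
        (by intro m _; simp [Psd, hp, hc])
        (by intro hor; simp [Psd] at hor)
        (fun _ => h.selfA i (Or.inl hp) (by rw [hc]; exact Nat.zero_le _))
        (by intro h351; simp at h351)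
        (by intro h341; simp at h341)
        (Or.inl ⟨by rw [hp]; exact Or.inr (Or.inl rfl), rfl⟩)
  | t35yes _ _ hp ht hn =>
      refine h.frame2 i (fun k hk => Function.update_of_ne hk _ _)
        (fun k hk => rfl) (fun k hk => rfl) (fun k hk => rfl)
        (by simp [CSp]) (h.flagC i (by rw [hp]; exact Or.inr (Or.inr (Or.inr (Or.inl rfl)))))
        (by intro m _; simp [Psd, hp])
        (by intro hor; simp [Psd] at hor)
        (fun _ => h.selfB i (Or.inl hp))
        (fun _ => hn)
        (by intro h341; simp at h341)
        (Or.inl ⟨by rw [hp]; exact Or.inr (Or.inr (Or.inr (Or.inl rfl))), rfl⟩)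
  | t351 _ _ hp =>
      refine h.frame2 i (fun k hk => Function.update_of_ne hk _ _)
        (fun k hk => rfl) (fun k hk => rfl) (fun k hk => rfl)
        (by simp [CSp])
        (h.flagC i (by rw [hp]; exact Or.inr (Or.inr (Or.inr (Or.inr (Or.inl rfl))))))
        (by intro m _; simp [Psd, hp])
        (by intro hor; simp [Psd] at hor)
        (fun _ => h.selfB i (Or.inr (Or.inl hp)))
        (by intro h351; simp at h351)
        (by intro h341; simp at h341)
        (Or.inl ⟨by rw [hp]; exact Or.inr (Or.inr (Or.inr (Or.inr (Or.inl rfl)))), rfl⟩)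
  | t34nocand _ _ j hp hc hj hf =>
      have hcsi : CSp (s.pc i) := by rw [hp]; exact Or.inr (Or.inl rfl)
      have hfi : s.flag i = .candidate := h.flagC i hcsi
      have hcne : s.cnt i - 1 ≠ i.val := by
        intro he
        exact hf (by rw [show j = i from Fin.ext (hj.trans he)]; exact hfi)
      constructor
      · intro k hk
        by_cases hki : k = i
        · subst hki; exact hfi
        · exact h.flagC k (by simpa [Function.update_of_ne hki] using hk)
      · intro k hor hle
        by_cases hki : k = i
        · subst hki
          simp at hle
          exact h.selfA k (Or.inl hp) (by omega)
        · simp only [Function.update_of_ne hki] at hor hle ⊢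
          exact h.selfA k hor hle
      · intro k hor
        by_cases hki : k = i
        · subst hki; simp at hor
        · simp only [Function.update_of_ne hki] at hor ⊢; exact h.selfB k hor
      · intro k hk
        by_cases hki : k = i
        · subst hki; simp at hk
        · simp only [Function.update_of_ne hki] at hk ⊢; exact h.at351 k hk
      · intro k hk
        by_cases hki : k = i
        · subst hki; simp at hk
        · simp only [Function.update_of_ne hki] at hk ⊢; exact h.pos341 k hk
      · -- pair
        set t := { s with cnt := Function.update s.cnt i (s.cnt i - 1), pc := Function.update s.pc i PC.s34 } with htdef
        have hsci : sc t i = sc s i := by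
          unfold sc
          refine if_congr ?_ rfl rfl
          simp [Psd, htdef, hp]
          omega
        have key : ∀ b, b ≠ i → CSp (s.pc b) → Psd t i b.val → Psd s b i.val →
            sc s i + sc s b + 1 ≤ s.nCand i + s.nCand b := by
          intro b hb cb pab pba
          have h1 : s.cnt i - 1 ≤ b.val := by
            rcases pab with ⟨_, hle⟩ | h35
            · simpa [htdef] using hle
            · simp [htdef] at h35
          have h2 : s.cnt i - 1 ≠ b.val := by
            intro he
            exact hf (by rw [show j = b from Fin.ext (hj.trans he)]; exact h.flagC b cb)
          have hcb : s.cnt i ≤ b.val := by omega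
          exact h.pair i b (Ne.symm hb) hcsi cb (Or.inl ⟨Or.inl hp, hcb⟩) pba
        intro a b hab ca cb pab pba
        by_cases ha : a = i
        · subst ha
          have hbne : b ≠ a := hab.symm
          have cb' : CSp (s.pc b) := by rwa [show t.pc b = s.pc b from Function.update_of_ne hbne _ _] at cb
          have pba' : Psd s b a.val := by
            rwa [Psd_congr (show t.pc b = s.pc b from Function.update_of_ne hbne _ _)
              (show t.cnt b = s.cnt b from Function.update_of_ne hbne _ _)] at pba
          have := key b hbne cb' pab pba'
          rw [hsci, show t.nCand a = s.nCand a from rfl, show t.nCand b = s.nCand b from rfl,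
            sc_congr (show t.pc b = s.pc b from Function.update_of_ne hbne _ _)
              (show t.cnt b = s.cnt b from Function.update_of_ne hbne _ _)]
          exact this
        by_cases hb : b = i
        · subst hb
          have ca' : CSp (s.pc a) := by rwa [show t.pc a = s.pc a from Function.update_of_ne ha _ _] at ca
          have pab' : Psd s a b.val := by
            rwa [Psd_congr (show t.pc a = s.pc a from Function.update_of_ne ha _ _)
              (show t.cnt a = s.cnt a from Function.update_of_ne ha _ _)] at pab
          have := key a ha ca' pba pab'
          rw [hsci, show t.nCand a = s.nCand a from rfl, show t.nCand b = s.nCand b from rfl,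
            sc_congr (show t.pc a = s.pc a from Function.update_of_ne ha _ _)
              (show t.cnt a = s.cnt a from Function.update_of_ne ha _ _)]
          omega
        · have ca' : CSp (s.pc a) := by rwa [show t.pc a = s.pc a from Function.update_of_ne ha _ _] at ca
          have cb' : CSp (s.pc b) := by rwa [show t.pc b = s.pc b from Function.update_of_ne hb _ _] at cb
          rw [show t.nCand a = s.nCand a from rfl, show t.nCand b = s.nCand b from rfl,
            sc_congr (show t.pc a = s.pc a from Function.update_of_ne ha _ _)
              (show t.cnt a = s.cnt a from Function.update_of_ne ha _ _),
            sc_congr (show t.pc b = s.pc b from Function.update_of_ne hb _ _)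
              (show t.cnt b = s.cnt b from Function.update_of_ne hb _ _)]
          exact h.pair a b hab ca' cb'
            (by rwa [Psd_congr (show t.pc a = s.pc a from Function.update_of_ne ha _ _)
              (show t.cnt a = s.cnt a from Function.update_of_ne ha _ _)] at pab)
            (by rwa [Psd_congr (show t.pc b = s.pc b from Function.update_of_ne hb _ _)
              (show t.cnt b = s.cnt b from Function.update_of_ne hb _ _)] at pba)
  | t341 _ _ hp =>
      have hcsi : CSp (s.pc i) := by rw [hp]; exact Or.inr (Or.inr (Or.inl rfl))
      have hfi : s.flag i = .candidate := h.flagC i hcsi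
      have hc1 : 1 ≤ s.cnt i := h.pos341 i hp
      constructor
      · intro k hk
        by_cases hki : k = i
        · subst hki; exact hfi
        · exact h.flagC k (by simpa [Function.update_of_ne hki] using hk)
      · intro k hor hle
        by_cases hki : k = i
        · subst hki; simp
        · simp only [Function.update_of_ne hki] at hor hle ⊢
          exact h.selfA k hor hle
      · intro k hor
        by_cases hki : k = i
        · subst hki; simp at hor
        · simp only [Function.update_of_ne hki] at hor ⊢; exact h.selfB k hor
      · intro k hk
        by_cases hki : k = i
        · subst hki; simp at hk
        · simp only [Function.update_of_ne hki] at hk ⊢; exact h.at351 k hk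
      · intro k hk
        by_cases hki : k = i
        · subst hki; simp at hk
        · simp only [Function.update_of_ne hki] at hk ⊢; exact h.pos341 k hk
      · -- pair
        set t := { s with nCand := Function.update s.nCand i (s.nCand i + 1), minCand := Function.update s.minCand i ((s.cnt i : ℤ) - 1), cnt := Function.update s.cnt i (s.cnt i - 1), pc := Function.update s.pc i PC.s34 } with ht
        have hti : t.nCand i = s.nCand i + 1 := by simp [ht]
        have key : ∀ b, b ≠ i → CSp (s.pc b) → Psd t i b.val → Psd s b i.val →
            sc t i + sc s b + 1 ≤ (s.nCand i + 1) + s.nCand b := by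
          intro b hb cb pab pba
          have hbv : b.val ≠ i.val := fun hv => hb (Fin.ext hv)
          have hble : s.cnt i - 1 ≤ b.val := by
            rcases pab with ⟨_, hle⟩ | h35
            · simpa [ht] using hle
            · simp [ht] at h35
          have hsb : sc s b ≤ s.nCand b := sc_le_nCand h b
          have hs1 : sc t i ≤ 1 := sc_le_one t i
          by_cases hci : s.cnt i ≤ i.val
          · have : 1 ≤ s.nCand i := h.selfA i (Or.inr hp) hci
            omega
          · by_cases hcb : s.cnt i ≤ b.val
            · have hpair := h.pair i b (Ne.symm hb) hcsi cb (Or.inl ⟨Or.inr hp, hcb⟩) pba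
              have hsci0 : sc s i = 0 := by
                unfold sc
                rw [if_neg]
                intro hpp
                rcases hpp with ⟨_, hle⟩ | h35
                · omega
                · rw [hp] at h35; simp at h35
              omega
            · have hsct0 : sc t i = 0 := by
                unfold sc
                rw [if_neg]
                intro hpp
                rcases hpp with ⟨_, hle⟩ | h35
                · simp [ht] at hle; omega
                · simp [ht] at h35
              omega
        intro a b hab ca cb pab pba
        by_cases ha : a = i
        · subst ha
          have hbne : b ≠ a := hab.symm
          have cb' : CSp (s.pc b) := by rwa [show t.pc b = s.pc b from Function.update_of_ne hbne _ _] at cb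
          have pba' : Psd s b a.val := by
            rwa [Psd_congr (show t.pc b = s.pc b from Function.update_of_ne hbne _ _)
              (show t.cnt b = s.cnt b from Function.update_of_ne hbne _ _)] at pba
          have := key b hbne cb' pab pba'
          rw [hti, show t.nCand b = s.nCand b from Function.update_of_ne hbne _ _,
            sc_congr (show t.pc b = s.pc b from Function.update_of_ne hbne _ _)
              (show t.cnt b = s.cnt b from Function.update_of_ne hbne _ _)]
          exact this
        by_cases hb : b = i
        · subst hb
          have ca' : CSp (s.pc a) := by rwa [show t.pc a = s.pc a from Function.update_of_ne ha _ _] at ca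
          have pab' : Psd s a b.val := by
            rwa [Psd_congr (show t.pc a = s.pc a from Function.update_of_ne ha _ _)
              (show t.cnt a = s.cnt a from Function.update_of_ne ha _ _)] at pab
          have := key a ha ca' pba pab'
          rw [hti, show t.nCand a = s.nCand a from Function.update_of_ne ha _ _,
            sc_congr (show t.pc a = s.pc a from Function.update_of_ne ha _ _)
              (show t.cnt a = s.cnt a from Function.update_of_ne ha _ _)]
          omega
        · have ca' : CSp (s.pc a) := by rwa [show t.pc a = s.pc a from Function.update_of_ne ha _ _] at ca
          have cb' : CSp (s.pc b) := by rwa [show t.pc b = s.pc b from Function.update_of_ne hb _ _] at cb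
          rw [show t.nCand a = s.nCand a from Function.update_of_ne ha _ _,
            show t.nCand b = s.nCand b from Function.update_of_ne hb _ _,
            sc_congr (show t.pc a = s.pc a from Function.update_of_ne ha _ _)
              (show t.cnt a = s.cnt a from Function.update_of_ne ha _ _),
            sc_congr (show t.pc b = s.pc b from Function.update_of_ne hb _ _)
              (show t.cnt b = s.cnt b from Function.update_of_ne hb _ _)]
          exact h.pair a b hab ca' cb'
            (by rwa [Psd_congr (show t.pc a = s.pc a from Function.update_of_ne ha _ _)
              (show t.cnt a = s.cnt a from Function.update_of_ne ha _ _)] at pab)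
            (by rwa [Psd_congr (show t.pc b = s.pc b from Function.update_of_ne hb _ _)
              (show t.cnt b = s.cnt b from Function.update_of_ne hb _ _)] at pba)

lemma inv_init : Inv (initSt N) := by
  refine ⟨?_, ?_, ?_, ?_, ?_, ?_⟩ <;> intros <;> simp_all [initSt, CSp, Psd]

lemma inv_of_reachable {s : St N} (hs : Reachable s) : Inv s := by
  obtain ⟨e, n, rfl⟩ := hs
  induction n with
  | zero => rw [e.init]; exact inv_init
  | succ n ih =>
    have hstep := e.step n
    cases hsched : e.sched n with
    | none => simp only [hsched] at hstep; rw [hstep]; exact ih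
    | some k => simp only [hsched] at hstep; exact Inv.preserve hstep ih

end Sym


open Sym in
/-- **Lemma: no two processes are in state 3.5.1 simultaneously
(symmetric algorithm).** In every reachable global state, no two distinct
processes have their program counters at state 3.5.1. -/
theorem sym_no_two_in_351 {N : ℕ} (s : St N) (hs : Reachable s)
    (i j : Fin N) (hi : s.pc i = PC.s351) (hj : s.pc j = PC.s351) : i = j := by
  by_contra hne
  have h := inv_of_reachable hs
  have hp := h.pair i j hne (by rw [hi]; exact Or.inr (Or.inr (Or.inr (Or.inr (Or.inl rfl)))))
    (by rw [hj]; exact Or.inr (Or.inr (Or.inr (Or.inr (Or.inl rfl)))))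
    (Or.inr (Or.inr (Or.inl hi))) (Or.inr (Or.inr (Or.inl hj)))
  have hni := h.at351 i hi
  have hnj := h.at351 j hj
  have hpsi : Psd s i i.val := Or.inr (Or.inr (Or.inl hi))
  have hpsj : Psd s j j.val := Or.inr (Or.inr (Or.inl hj))
  have hsi1 : sc s i = 1 := by simp [sc, hpsi]
  have hsj1 : sc s j = 1 := by simp [sc, hpsj]
  omega
end
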